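/- For the group G_{1,r} = ⟨x, y | x^{-r} y^{-1} x y x^r = y^{-2} x^r y x y^{-1} x^{-r} y^2⟩, the natural map F_2 → G_{1,r} induces an isomorphism G_{1,r}/γ_4(G_{1,r}) ≅ F_2/γ_4(F_2), i.e., the relator word lies in γ_4(F_2). -/

import Mathlib

open scoped commutatorElement


/- STATEMENT 11: The relator of
   `G_{1,r} = ⟨x, y | x^{-r} y⁻¹ x y x^r = y⁻² x^r y x y⁻¹ x^{-r} y²⟩` lies in
   `γ₄(F₂) = lowerCentralSeries F₂ 3`, and the natural map `F₂ → G_{1,r}` induces an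
   isomorphism `F₂/γ₄(F₂) ≃ G_{1,r}/γ₄(G_{1,r})`. -/

section Helpers
variable {Q : Type*} [Group Q]

lemma conj_fm (p g : Q) : g * p * g⁻¹ = p * ⁅p⁻¹, g⁆ := by
  simp only [commutatorElement_def]; group

lemma comm_mul_right (p q s : Q) : ⁅p, q * s⁆ = ⁅p, q⁆ * (q * ⁅p, s⁆ * q⁻¹) := by
  simp only [commutatorElement_def]; group

lemma central_conj {z : Q} (hz : ∀ l, Commute z l) (g : Q) : g * z * g⁻¹ = z := by
  rw [← (hz g).eq, mul_inv_cancel_right]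

lemma central_conj' {z : Q} (hz : ∀ l, Commute z l) (g : Q) : z * g * z⁻¹ = g := by
  rw [(hz g).eq, mul_inv_cancel_right]

lemma comm_mul_right' {p : Q} (hp : ∀ q l : Q, Commute ⁅p, q⁆ l) (q s : Q) :
    ⁅p, q * s⁆ = ⁅p, q⁆ * ⁅p, s⁆ := by
  rw [comm_mul_right, central_conj (hp s)]

lemma comm_inv_right' {p : Q} (hp : ∀ q l : Q, Commute ⁅p, q⁆ l) (q : Q) :
    ⁅p, q⁻¹⁆ = ⁅p, q⁆⁻¹ := by
  have h : (1 : Q) = ⁅p, q⁆ * ⁅p, q⁻¹⁆ := by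
    rw [← comm_mul_right' hp, mul_inv_cancel, commutatorElement_one_right]
  exact (inv_eq_of_mul_eq_one_right h.symm).symm

lemma comm_inv_left' {p : Q} (hp : ∀ q l : Q, Commute ⁅p, q⁆ l) (q : Q) :
    ⁅p⁻¹, q⁆ = ⁅p, q⁆⁻¹ := by
  have h1 : ⁅p⁻¹, q⁆ = p⁻¹ * ⁅p, q⁆⁻¹ * (p⁻¹)⁻¹ := by
    simp only [commutatorElement_def]; group
  rw [h1, central_conj (fun l => (hp q l).inv_left)]

lemma comm_central_mul_left {z : Q} (hz : ∀ l, Commute z l) (p q : Q) :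
    ⁅z * p, q⁆ = ⁅p, q⁆ := by
  have h : ⁅z * p, q⁆ = (z * (p * q * p⁻¹) * z⁻¹) * q⁻¹ := by
    simp only [commutatorElement_def]; group
  rw [h, central_conj' hz]
  simp only [commutatorElement_def]

lemma key (x y a : Q) (H : ∀ g h k l : Q, ⁅⁅⁅g, h⁆, k⁆, l⁆ = 1) (hxa : Commute a x) :
    a⁻¹ * y⁻¹ * x * y * a * (y⁻¹ * y⁻¹ * a * y * x * y⁻¹ * a⁻¹ * y * y)⁻¹ = 1 := by
  have cent : ∀ g h k l : Q, Commute ⁅⁅g, h⁆, k⁆ l := fun g h k l =>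
    commutatorElement_eq_one_iff_commute.mp (H g h k l)
  set c := ⁅x⁻¹, y⁻¹⁆ with hcdef
  set e := ⁅x⁻¹, y⁆ with hedef
  have hc : ∀ q l : Q, Commute ⁅c, q⁆ l := fun q l => cent _ _ _ _
  have he : ∀ q l : Q, Commute ⁅e, q⁆ l := fun q l => cent _ _ _ _
  have hq : ∀ l, Commute ⁅c, y⁻¹⁆ l := hc y⁻¹
  have hq' : ∀ l : Q, Commute ⁅e⁻¹, y⁻¹⁆ l := by
    intro l; rw [comm_inv_left' he]; exact (he y⁻¹ l).inv_left
  have hF : ∀ l : Q, Commute ⁅e⁻¹, a⁆ l := by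
    intro l; rw [comm_inv_left' he]; exact (he a l).inv_left
  have h20 : c * (e * ⁅e⁻¹, y⁻¹⁆) = 1 := by
    have h0 : ⁅x⁻¹, y⁻¹ * y⁆ = (1 : Q) := by
      rw [inv_mul_cancel, commutatorElement_one_right]
    have h1 := comm_mul_right x⁻¹ y⁻¹ y
    rw [h0, inv_inv, ← hcdef, ← hedef] at h1
    have h2 : y⁻¹ * e * y = e * ⁅e⁻¹, y⁻¹⁆ := by
      have := conj_fm e y⁻¹; rwa [inv_inv] at this
    rw [h2] at h1
    exact h1.symm
  have hei : e⁻¹ = ⁅e⁻¹, y⁻¹⁆ * c := by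
    have h5 : e * ⁅e⁻¹, y⁻¹⁆ = c⁻¹ := eq_inv_of_mul_eq_one_right h20
    have h6 : e * (⁅e⁻¹, y⁻¹⁆ * c) = 1 := by rw [← mul_assoc, h5, inv_mul_cancel]
    exact inv_eq_of_mul_eq_one_right h6
  have hd : ⁅c⁻¹, a⁻¹⁆ = ⁅c, a⁆ := by
    rw [comm_inv_left' hc, comm_inv_right' hc, inv_inv]
  have hZq : ⁅e⁻¹, y⁻¹⁆ = ⁅c, y⁻¹⁆ := by
    conv_lhs => rw [hei]
    rw [comm_central_mul_left hq']
  have hf : ⁅e⁻¹, a⁆ = ⁅c, a⁆ := by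
    conv_lhs => rw [hei]
    rw [comm_central_mul_left hq']
  have hm : ⁅e⁻¹, y⁻¹ * y⁻¹⁆ = ⁅c, y⁻¹⁆ * ⁅c, y⁻¹⁆ := by
    conv_lhs => rw [hei]
    rw [comm_central_mul_left hq', comm_mul_right' hc]
  have hk : ⁅x⁻¹, y⁻¹ * y⁻¹⁆ = c * (c * ⁅c, y⁻¹⁆⁻¹) := by
    rw [comm_mul_right, ← hcdef]
    have h2 : y⁻¹ * c * (y⁻¹)⁻¹ = c * ⁅c⁻¹, y⁻¹⁆ := conj_fm c y⁻¹
    rw [h2, comm_inv_left' hc]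
  have hu : a⁻¹ * y⁻¹ * x * y * a = x * (c * ⁅c⁻¹, a⁻¹⁆) := by
    have s1 : a⁻¹ * y⁻¹ * x * y * a = a⁻¹ * x * (c * a) := by
      rw [hcdef]; simp only [commutatorElement_def]; group
    have s3 : a⁻¹ * c * a = c * ⁅c⁻¹, a⁻¹⁆ := by
      have := conj_fm c a⁻¹; rwa [inv_inv] at this
    rw [s1, hxa.inv_left.eq, ← s3]; group
  have hv : y⁻¹ * y⁻¹ * a * y * x * y⁻¹ * a⁻¹ * y * y
      = x * ⁅x⁻¹, y⁻¹ * y⁻¹⁆ * (e * ⁅e⁻¹, y⁻¹ * y⁻¹⁆) * ⁅e⁻¹, a⁆ := by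
    have t1 : a * (y * x * y⁻¹) * a⁻¹ = x * (e * ⁅e⁻¹, a⁆) := by
      have t0 : a * (y * x * y⁻¹) * a⁻¹ = a * x * (e * a⁻¹) := by
        rw [hedef]; simp only [commutatorElement_def]; group
      have t3 : a * e * a⁻¹ = e * ⁅e⁻¹, a⁆ := conj_fm e a
      rw [t0, hxa.eq, ← t3]; group
    have g1 : y⁻¹ * y⁻¹ * x * (y⁻¹ * y⁻¹)⁻¹ = x * ⁅x⁻¹, y⁻¹ * y⁻¹⁆ := conj_fm x (y⁻¹ * y⁻¹)
    have g2 : y⁻¹ * y⁻¹ * e * (y⁻¹ * y⁻¹)⁻¹ = e * ⁅e⁻¹, y⁻¹ * y⁻¹⁆ := conj_fm e (y⁻¹ * y⁻¹)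
    have g3 : y⁻¹ * y⁻¹ * ⁅e⁻¹, a⁆ * (y⁻¹ * y⁻¹)⁻¹ = ⁅e⁻¹, a⁆ := central_conj hF (y⁻¹ * y⁻¹)
    calc y⁻¹ * y⁻¹ * a * y * x * y⁻¹ * a⁻¹ * y * y
        = (y⁻¹ * y⁻¹) * (a * (y * x * y⁻¹) * a⁻¹) * (y * y) := by group
      _ = (y⁻¹ * y⁻¹) * (x * (e * ⁅e⁻¹, a⁆)) * (y * y) := by rw [t1]
      _ = (y⁻¹ * y⁻¹ * x * (y⁻¹ * y⁻¹)⁻¹) * (y⁻¹ * y⁻¹ * e * (y⁻¹ * y⁻¹)⁻¹) *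
            (y⁻¹ * y⁻¹ * ⁅e⁻¹, a⁆ * (y⁻¹ * y⁻¹)⁻¹) := by
              simp only [mul_inv_rev, inv_inv]; group
      _ = x * ⁅x⁻¹, y⁻¹ * y⁻¹⁆ * (e * ⁅e⁻¹, y⁻¹ * y⁻¹⁆) * ⁅e⁻¹, a⁆ := by rw [g1, g2, g3]
  have he3 : e = c⁻¹ * ⁅c, y⁻¹⁆⁻¹ := by
    have h7 := congrArg (·⁻¹) hei
    simp only [inv_inv, mul_inv_rev] at h7
    rw [h7, hZq]
  rw [mul_inv_eq_one, hu, hv, hd, hk, hm, hf, he3]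
  have hswap : ⁅c, y⁻¹⁆⁻¹ * c⁻¹ = c⁻¹ * ⁅c, y⁻¹⁆⁻¹ := ((hq c⁻¹).inv_left).eq
  have final : x * (c * (c * ⁅c, y⁻¹⁆⁻¹)) * ((c⁻¹ * ⁅c, y⁻¹⁆⁻¹) * (⁅c, y⁻¹⁆ * ⁅c, y⁻¹⁆)) * ⁅c, a⁆
      = x * (c * ⁅c, a⁆) := by
    calc x * (c * (c * ⁅c, y⁻¹⁆⁻¹)) * ((c⁻¹ * ⁅c, y⁻¹⁆⁻¹) * (⁅c, y⁻¹⁆ * ⁅c, y⁻¹⁆)) * ⁅c, a⁆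
        = x * c * c * (⁅c, y⁻¹⁆⁻¹ * c⁻¹) * ⁅c, y⁻¹⁆⁻¹ * ⁅c, y⁻¹⁆ * ⁅c, y⁻¹⁆ * ⁅c, a⁆ := by group
      _ = x * c * c * (c⁻¹ * ⁅c, y⁻¹⁆⁻¹) * ⁅c, y⁻¹⁆⁻¹ * ⁅c, y⁻¹⁆ * ⁅c, y⁻¹⁆ * ⁅c, a⁆ := by
          rw [hswap]
      _ = x * (c * ⁅c, a⁆) := by group
  exact final.symm
end Helpers

namespace Stmt11

abbrev F := FreeGroup (Fin 2)

def x : F := FreeGroup.of 0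
def y : F := FreeGroup.of 1

/-- The relator of `G_{1,r}`. -/
def R (r : ℕ) : F :=
  (x ^ r)⁻¹ * y⁻¹ * x * y * x ^ r *
    (y⁻¹ * y⁻¹ * x ^ r * y * x * y⁻¹ * (x ^ r)⁻¹ * y * y)⁻¹

abbrev G1 (r : ℕ) := PresentedGroup ({R r} : Set F)

/-- The composite `F₂ → G_{1,r} → G_{1,r}/γ₄(G_{1,r})`. -/
def f (r : ℕ) : F →* (G1 r ⧸ Subgroup.lowerCentralSeries (⊤ : Subgroup (G1 r)) 3) :=
  (QuotientGroup.mk' (Subgroup.lowerCentralSeries (⊤ : Subgroup (G1 r)) 3)).comp (PresentedGroup.mk _)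

lemma lcs_mem_3 {G : Type*} [Group G] (g h k l : G) :
    ⁅⁅⁅g, h⁆, k⁆, l⁆ ∈ Subgroup.lowerCentralSeries (⊤ : Subgroup G) 3 := by
  have h0g : g ∈ Subgroup.lowerCentralSeries (⊤ : Subgroup G) 0 := Subgroup.mem_top g
  have h1 : ⁅g, h⁆ ∈ Subgroup.lowerCentralSeries (⊤ : Subgroup G) 1 :=
    Subgroup.commutator_mem_commutator h0g (Subgroup.mem_top h)
  have h2 : ⁅⁅g, h⁆, k⁆ ∈ Subgroup.lowerCentralSeries (⊤ : Subgroup G) 2 :=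
    Subgroup.commutator_mem_commutator h1 (Subgroup.mem_top k)
  exact Subgroup.commutator_mem_commutator h2 (Subgroup.mem_top l)

lemma quot_comm {G : Type*} [Group G]
    (g h k l : G ⧸ Subgroup.lowerCentralSeries (⊤ : Subgroup G) 3) : ⁅⁅⁅g, h⁆, k⁆, l⁆ = 1 := by
  obtain ⟨g, rfl⟩ := QuotientGroup.mk_surjective g
  obtain ⟨h, rfl⟩ := QuotientGroup.mk_surjective h
  obtain ⟨k, rfl⟩ := QuotientGroup.mk_surjective k
  obtain ⟨l, rfl⟩ := QuotientGroup.mk_surjective l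
  have h1 : ((QuotientGroup.mk' (Subgroup.lowerCentralSeries (⊤ : Subgroup G) 3)) ⁅⁅⁅g, h⁆, k⁆, l⁆) = 1 :=
    (QuotientGroup.eq_one_iff _).mpr (lcs_mem_3 g h k l)
  rw [map_commutatorElement, map_commutatorElement, map_commutatorElement] at h1
  exact h1

lemma R_mem (r : ℕ) : R r ∈ Subgroup.lowerCentralSeries (⊤ : Subgroup F) 3 := by
  apply (QuotientGroup.eq_one_iff (R r)).mp
  show (QuotientGroup.mk' (Subgroup.lowerCentralSeries (⊤ : Subgroup F) 3)) (R r) = 1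
  rw [R]
  simp only [map_mul, map_inv, map_pow]
  exact key _ _ _ quot_comm (Commute.pow_left (Commute.refl _) r)

lemma lcs_map_eq (r : ℕ) (n : ℕ) :
    Subgroup.map (PresentedGroup.mk ({R r} : Set F)) (Subgroup.lowerCentralSeries (⊤ : Subgroup F) n) =
      Subgroup.lowerCentralSeries (⊤ : Subgroup (G1 r)) n := by
  induction n with
  | zero =>
      rw [Subgroup.lowerCentralSeries_zero, Subgroup.lowerCentralSeries_zero]
      exact Subgroup.map_top_of_surjective _ (PresentedGroup.mk_surjective _)
  | succ n ih =>
      rw [show Subgroup.lowerCentralSeries (⊤ : Subgroup F) (n + 1) = ⁅Subgroup.lowerCentralSeries (⊤ : Subgroup F) n, ⊤⁆ from rfl,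
        show Subgroup.lowerCentralSeries (⊤ : Subgroup (G1 r)) (n + 1) = ⁅Subgroup.lowerCentralSeries (⊤ : Subgroup (G1 r)) n, ⊤⁆ from rfl,
        Subgroup.map_commutator, ih,
        Subgroup.map_top_of_surjective _ (PresentedGroup.mk_surjective _)]

theorem relator_in_gamma4 (r : ℕ) (hr : 0 < r) :
    R r ∈ Subgroup.lowerCentralSeries (⊤ : Subgroup F) 3 ∧
    ∃ e : (F ⧸ Subgroup.lowerCentralSeries (⊤ : Subgroup F) 3) ≃* (G1 r ⧸ Subgroup.lowerCentralSeries (⊤ : Subgroup (G1 r)) 3),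
      ∀ w : F, e (QuotientGroup.mk' (Subgroup.lowerCentralSeries (⊤ : Subgroup F) 3) w) = f r w := by
  refine ⟨R_mem r, ?_⟩
  have hker : MonoidHom.ker (f r) = Subgroup.lowerCentralSeries (⊤ : Subgroup F) 3 := by
    ext w
    simp only [MonoidHom.mem_ker, f, MonoidHom.comp_apply, QuotientGroup.mk'_apply]
    rw [QuotientGroup.eq_one_iff]
    constructor
    · intro hw
      rw [← lcs_map_eq r 3] at hw
      obtain ⟨w', hw', heq⟩ := hw
      have h1 : (PresentedGroup.mk ({R r} : Set F)) (w * w'⁻¹) = 1 := by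
        rw [map_mul, map_inv, heq, mul_inv_cancel]
      have hmem : w * w'⁻¹ ∈ Subgroup.normalClosure ({R r} : Set F) :=
        (QuotientGroup.eq_one_iff _).mp h1
      have hsub : Subgroup.normalClosure ({R r} : Set F) ≤ Subgroup.lowerCentralSeries (⊤ : Subgroup F) 3 :=
        Subgroup.normalClosure_le_normal (Set.singleton_subset_iff.mpr (R_mem r))
      have hw2 : w = w * w'⁻¹ * w' := by group
      rw [hw2]
      exact Subgroup.mul_mem _ (hsub hmem) hw'
    · intro hw
      rw [← lcs_map_eq r 3]
      exact ⟨w, hw, rfl⟩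
  have hsurj : Function.Surjective (f r) := by
    intro q
    obtain ⟨g, hg⟩ := QuotientGroup.mk'_surjective _ q
    obtain ⟨w, hw⟩ := PresentedGroup.mk_surjective _ g
    exact ⟨w, by rw [f, MonoidHom.comp_apply, hw, hg]⟩
  refine ⟨(QuotientGroup.quotientMulEquivOfEq hker.symm).trans
    (QuotientGroup.quotientKerEquivOfSurjective (f r) hsurj), fun w => ?_⟩
  show (QuotientGroup.quotientKerEquivOfSurjective (f r) hsurj)
      ((QuotientGroup.quotientMulEquivOfEq hker.symm) (QuotientGroup.mk' _ w)) = f r w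
  rw [QuotientGroup.mk'_apply, QuotientGroup.quotientMulEquivOfEq_mk]
  exact QuotientGroup.kerLift_mk (f r) w

end Stmt11
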